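/- For any bijection φ : ℕ → ℚ, there is at most one real number ξ at which the right derivative of F_φ exists and is finite and nonzero, and at most one real number ξ at which the left derivative of F_φ exists and is finite and nonzero. -/

import Mathlib

noncomputable def Fphi (φ : ℕ → ℚ) (x : ℝ) : ℝ :=
  ∑' n : ℕ, if (φ n : ℝ) < x then ((1:ℝ)/2) ^ n else 0

namespace Stmt14Aux

open Filter Set

lemma summable_aux (φ : ℕ → ℚ) (P : ℕ → Prop) [DecidablePred P] :
    Summable (fun n : ℕ => if P n then ((1:ℝ)/2)^n else 0) := by
  apply Summable.of_nonneg_of_le (fun n => ?_) (fun n => ?_)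
    (summable_geometric_of_lt_one (by norm_num) (by norm_num : (1:ℝ)/2 < 1))
  · split <;> positivity
  · split
    · exact le_refl _
    · positivity

lemma Fphi_sub (φ : ℕ → ℚ) {x y : ℝ} (hxy : x ≤ y) :
    Fphi φ y - Fphi φ x
      = ∑' n : ℕ, if x ≤ (φ n : ℝ) ∧ (φ n : ℝ) < y then ((1:ℝ)/2)^n else 0 := by
  rw [Fphi, Fphi, ← Summable.tsum_sub (summable_aux φ (fun n => (φ n : ℝ) < y))
      (summable_aux φ (fun n => (φ n : ℝ) < x))]
  refine tsum_congr fun n => ?_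
  by_cases h1 : (φ n : ℝ) < x
  · have h2 : (φ n : ℝ) < y := lt_of_lt_of_le h1 hxy
    simp [h1, h2, not_le.mpr h1]
  · by_cases h2 : (φ n : ℝ) < y
    · simp [h1, h2, not_lt.mp h1]
    · simp [h1, h2]

lemma single_le (φ : ℕ → ℚ) {x y : ℝ} (hxy : x ≤ y) {k : ℕ}
    (hk1 : x ≤ (φ k : ℝ)) (hk2 : (φ k : ℝ) < y) :
    ((1:ℝ)/2)^k ≤ Fphi φ y - Fphi φ x := by
  rw [Fphi_sub φ hxy]
  have := Summable.le_tsum (summable_aux φ (fun n => x ≤ (φ n : ℝ) ∧ (φ n : ℝ) < y)) k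
    (fun m _ => by split <;> positivity)
  simpa [hk1, hk2] using this

lemma tail_le (φ : ℕ → ℚ) {x y : ℝ} (hxy : x ≤ y) (m : ℕ)
    (hm : ∀ k, x ≤ (φ k : ℝ) → (φ k : ℝ) < y → m ≤ k) :
    Fphi φ y - Fphi φ x ≤ 2 * ((1:ℝ)/2)^m := by
  rw [Fphi_sub φ hxy]
  have h1 : ∑' n : ℕ, (if x ≤ (φ n : ℝ) ∧ (φ n : ℝ) < y then ((1:ℝ)/2)^n else 0)
      ≤ ∑' n : ℕ, (if m ≤ n then ((1:ℝ)/2)^n else 0) := by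
    refine Summable.tsum_le_tsum (fun n => ?_) (summable_aux φ _) (summable_aux φ _)
    · split_ifs with h h'
      · exact le_refl _
      · exact absurd (hm n h.1 h.2) h'
      · positivity
      · exact le_refl _
  have h2 : ∑' n : ℕ, (if m ≤ n then ((1:ℝ)/2)^n else 0) = 2 * ((1:ℝ)/2)^m := by
    have heq := Function.Injective.tsum_eq
      (f := fun n : ℕ => if m ≤ n then ((1:ℝ)/2)^n else 0)
      (add_left_injective m)
      (fun z hz => by
        have hmz : m ≤ z := by
          by_contra hmz
          simp only [Function.mem_support] at hz
          exact hz (by simp [hmz])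
        exact ⟨z - m, by show z - m + m = z; omega⟩)
    rw [← heq]
    have hterm : ∀ a : ℕ,
        (if m ≤ a + m then ((1:ℝ)/2)^(a+m) else 0) = ((1:ℝ)/2)^m * ((1:ℝ)/2)^a := by
      intro a; rw [if_pos (by omega), pow_add]; ring
    calc ∑' a : ℕ, (fun n : ℕ => if m ≤ n then ((1:ℝ)/2)^n else 0) (a + m)
        = ∑' a : ℕ, ((1:ℝ)/2)^m * ((1:ℝ)/2)^a := tsum_congr hterm
      _ = ((1:ℝ)/2)^m * ∑' a : ℕ, ((1:ℝ)/2)^a := tsum_mul_left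
      _ = 2 * ((1:ℝ)/2)^m := by
          rw [tsum_geometric_of_lt_one (by norm_num) (by norm_num)]; norm_num; ring
  calc _ ≤ _ := h1
    _ = _ := h2

lemma Fphi_mono (φ : ℕ → ℚ) : Monotone (Fphi φ) := by
  intro x y hxy
  refine Summable.tsum_le_tsum (fun n => ?_) (summable_aux φ _) (summable_aux φ _)
  split_ifs with h1 h2
  · exact le_refl _
  · exact absurd (lt_of_lt_of_le h1 hxy) h2
  · positivity
  · exact le_refl _

lemma deriv_pos_right (φ : ℕ → ℚ) {ξ d : ℝ}
    (h : HasDerivWithinAt (Fphi φ) d (Set.Ioi ξ) ξ) (hd : d ≠ 0) : 0 < d := by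
  rcases hd.lt_or_gt with h' | h'
  · exfalso
    have hs := (hasDerivWithinAt_iff_tendsto_slope' (Set.notMem_Ioi.mpr le_rfl)).mp h
    have : (0:ℝ) ≤ d := by
      refine ge_of_tendsto hs ?_
      filter_upwards [self_mem_nhdsWithin] with y hy
      have hy' : ξ < y := hy
      rw [slope_def_field]
      have := Fphi_mono φ hy'.le
      have h0 : (0:ℝ) < y - ξ := by linarith
      rw [div_eq_mul_inv]
      have : (0:ℝ) ≤ Fphi φ y - Fphi φ ξ := by linarith
      positivity
    linarith
  · exact h'

lemma deriv_pos_left (φ : ℕ → ℚ) {ξ d : ℝ}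
    (h : HasDerivWithinAt (Fphi φ) d (Set.Iio ξ) ξ) (hd : d ≠ 0) : 0 < d := by
  rcases hd.lt_or_gt with h' | h'
  · exfalso
    have hs := (hasDerivWithinAt_iff_tendsto_slope' (Set.notMem_Iio.mpr le_rfl)).mp h
    have : (0:ℝ) ≤ d := by
      refine ge_of_tendsto hs ?_
      filter_upwards [self_mem_nhdsWithin] with y hy
      have hy' : y < ξ := hy
      rw [slope_def_field]
      have := Fphi_mono φ hy'.le
      have h0 : y - ξ < 0 := by linarith
      have h1 : Fphi φ y - Fphi φ ξ ≤ 0 := by linarith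
      exact div_nonneg_of_nonpos h1 h0.le
    linarith
  · exact h'

lemma key_right (φ : ℕ → ℚ) {ξ d : ℝ}
    (h : HasDerivWithinAt (Fphi φ) d (Set.Ioi ξ) ξ) (hd : d ≠ 0) :
    ∃ C > 0, ∀ᶠ n : ℕ in atTop,
      ξ < (φ n : ℝ) ∧ (φ n : ℝ) < ξ + C * ((1:ℝ)/2)^n := by
  have hdpos : 0 < d := deriv_pos_right φ h hd
  have hs := (hasDerivWithinAt_iff_tendsto_slope' (Set.notMem_Ioi.mpr le_rfl)).mp h
  -- get δ
  obtain ⟨δ, hδpos, hδ⟩ := Metric.tendsto_nhdsWithin_nhds.mp hs (d/4) (by linarith)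
  -- slope bounds
  have Hslope : ∀ h' : ℝ, 0 < h' → h' < δ →
      3*d/4 * h' < Fphi φ (ξ + h') - Fphi φ ξ ∧
      Fphi φ (ξ + h') - Fphi φ ξ < 5*d/4 * h' := by
    intro h' h0 h1
    have hmem : ξ + h' ∈ Set.Ioi ξ := by simp [Set.mem_Ioi]; linarith
    have hdist : dist (ξ + h') ξ < δ := by
      rw [Real.dist_eq]; rw [abs_of_pos (by linarith : (0:ℝ) < ξ + h' - ξ)]; linarith
    have := hδ hmem hdist
    rw [Real.dist_eq, slope_def_field] at this
    have heq : ξ + h' - ξ = h' := by ring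
    rw [heq] at this
    rw [abs_lt] at this
    constructor
    · have := this.1
      have h2 : d - d/4 < (Fphi φ (ξ + h') - Fphi φ ξ) / h' := by linarith
      calc 3*d/4 * h' = (d - d/4) * h' := by ring
        _ < (Fphi φ (ξ + h') - Fphi φ ξ) / h' * h' := by
            exact mul_lt_mul_of_pos_right h2 h0
        _ = Fphi φ (ξ + h') - Fphi φ ξ := by field_simp
    · have := this.2
      have h2 : (Fphi φ (ξ + h') - Fphi φ ξ) / h' < d + d/4 := by linarith
      calc Fphi φ (ξ + h') - Fphi φ ξ = (Fphi φ (ξ + h') - Fphi φ ξ) / h' * h' := by field_simp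
        _ < (d + d/4) * h' := mul_lt_mul_of_pos_right h2 h0
        _ = 5*d/4 * h' := by ring
  refine ⟨3/(2*d), by positivity, ?_⟩
  have htend : Tendsto (fun n : ℕ => 3/(2*d) * ((1:ℝ)/2)^n) atTop (nhds 0) := by
    have := tendsto_pow_atTop_nhds_zero_of_lt_one (by norm_num : (0:ℝ) ≤ 1/2) (by norm_num)
    simpa using this.const_mul (3/(2*d))
  filter_upwards [htend.eventually_lt_const hδpos] with n hn
  set g : ℝ := ((1:ℝ)/2)^n with hg
  have hgpos : 0 < g := by positivity
  set hh : ℝ := 3/(2*d) * g with hhh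
  have hhpos : 0 < hh := by positivity
  have hhδ : hh < δ := hn
  obtain ⟨hlow, hup⟩ := Hslope hh hhpos hhδ
  have hSg : g < Fphi φ (ξ + hh) - Fphi φ ξ := by
    have : 3*d/4 * hh = 9/8 * g := by rw [hhh]; field_simp; ring
    nlinarith
  -- find k ≤ n in the interval
  have hex : ∃ k ≤ n, ξ ≤ (φ k : ℝ) ∧ (φ k : ℝ) < ξ + hh := by
    by_contra hcon
    push_neg at hcon
    have : Fphi φ (ξ + hh) - Fphi φ ξ ≤ 2 * ((1:ℝ)/2)^(n+1) := by
      refine tail_le φ (by linarith) (n+1) (fun k h1 h2 => ?_)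
      by_contra hk
      exact absurd h2 (not_lt.mpr (hcon k (by omega) h1))
    have h2 : 2 * ((1:ℝ)/2)^(n+1) = g := by rw [pow_succ]; ring
    linarith
  obtain ⟨k, hkn, hk1, hk2⟩ := hex
  -- 2^{-k} ≤ (5d/4) (φ k - ξ)
  have hbound : ((1:ℝ)/2)^k ≤ 5*d/4 * ((φ k : ℝ) - ξ) := by
    by_contra hcon
    push_neg at hcon
    set η : ℝ := min ((((1:ℝ)/2)^k - 5*d/4 * ((φ k : ℝ) - ξ)) / (5*d/4) / 2)
        ((δ - ((φ k : ℝ) - ξ)) / 2) with hη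
    have hφkδ : (φ k : ℝ) - ξ < δ := by linarith
    have hηpos : 0 < η := by
      apply lt_min
      · have : 0 < ((1:ℝ)/2)^k - 5*d/4 * ((φ k : ℝ) - ξ) := by linarith
        positivity
      · linarith
    have hη1 : 5*d/4 * η ≤ (((1:ℝ)/2)^k - 5*d/4 * ((φ k : ℝ) - ξ)) / 2 := by
      have := min_le_left ((((1:ℝ)/2)^k - 5*d/4 * ((φ k : ℝ) - ξ)) / (5*d/4) / 2)
        ((δ - ((φ k : ℝ) - ξ)) / 2)
      rw [← hη] at this
      calc 5*d/4 * η ≤ 5*d/4 * ((((1:ℝ)/2)^k - 5*d/4 * ((φ k : ℝ) - ξ)) / (5*d/4) / 2) :=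
            mul_le_mul_of_nonneg_left this (by positivity)
        _ = (((1:ℝ)/2)^k - 5*d/4 * ((φ k : ℝ) - ξ)) / 2 := by field_simp
    have hη2 : η ≤ (δ - ((φ k : ℝ) - ξ)) / 2 := min_le_right _ _
    set h' : ℝ := ((φ k : ℝ) - ξ) + η with hh'
    have hφkξ : 0 ≤ (φ k : ℝ) - ξ := by linarith
    have h'pos : 0 < h' := by simp [hh']; linarith
    have h'δ : h' < δ := by simp [hh']; linarith
    have hle := single_le φ (by linarith : ξ ≤ ξ + h') hk1 (by simp [hh']; push_cast; linarith)
    have hup' := (Hslope h' h'pos h'δ).2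
    have : ((1:ℝ)/2)^k < 5*d/4 * (((φ k : ℝ) - ξ) + η) := by
      calc ((1:ℝ)/2)^k ≤ Fphi φ (ξ + h') - Fphi φ ξ := hle
        _ < 5*d/4 * h' := hup'
        _ = 5*d/4 * (((φ k : ℝ) - ξ) + η) := by rw [hh']
    nlinarith
  have hφkpos : 0 < (φ k : ℝ) - ξ := by
    rcases lt_or_ge 0 ((φ k : ℝ) - ξ) with h' | h'
    · exact h'
    · exfalso
      have : 5*d/4 * ((φ k : ℝ) - ξ) ≤ 0 := mul_nonpos_of_nonneg_of_nonpos (by positivity) h'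
      have : ((1:ℝ)/2)^k ≤ 0 := le_trans hbound this
      have : (0:ℝ) < ((1:ℝ)/2)^k := by positivity
      linarith
  -- k = n
  have hkn' : k = n := by
    have h1 : ((1:ℝ)/2)^k < 2 * g := by
      have : 5*d/4 * ((φ k : ℝ) - ξ) < 5*d/4 * hh := by
        apply mul_lt_mul_of_pos_left _ (by positivity)
        linarith
      have h2 : 5*d/4 * hh = 15/8 * g := by rw [hhh]; field_simp; ring
      nlinarith
    have h2 : n ≤ k := by
      by_contra hc
      push_neg at hc
      have hkk : k + 1 ≤ n := hc
      have : ((1:ℝ)/2)^n ≤ ((1:ℝ)/2)^(k+1) :=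
        pow_le_pow_of_le_one (by norm_num) (by norm_num) hkk
      have h3 : ((1:ℝ)/2)^(k+1) = ((1:ℝ)/2)^k / 2 := by rw [pow_succ]; ring
      rw [hg] at h1
      linarith [h1, this, h3 ▸ this]
    omega
  subst hkn'
  constructor
  · linarith
  · rw [hhh] at hk2; linarith

lemma key_left (φ : ℕ → ℚ) {ξ d : ℝ}
    (h : HasDerivWithinAt (Fphi φ) d (Set.Iio ξ) ξ) (hd : d ≠ 0) :
    ∃ C > 0, ∀ᶠ n : ℕ in atTop,
      (φ n : ℝ) < ξ ∧ ξ - C * ((1:ℝ)/2)^n ≤ (φ n : ℝ) := by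
  have hdpos : 0 < d := deriv_pos_left φ h hd
  have hs := (hasDerivWithinAt_iff_tendsto_slope' (Set.notMem_Iio.mpr le_rfl)).mp h
  obtain ⟨δ, hδpos, hδ⟩ := Metric.tendsto_nhdsWithin_nhds.mp hs (d/4) (by linarith)
  have Hslope : ∀ h' : ℝ, 0 < h' → h' < δ →
      3*d/4 * h' < Fphi φ ξ - Fphi φ (ξ - h') ∧
      Fphi φ ξ - Fphi φ (ξ - h') < 5*d/4 * h' := by
    intro h' h0 h1
    have hmem : ξ - h' ∈ Set.Iio ξ := by simp [Set.mem_Iio]; linarith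
    have hdist : dist (ξ - h') ξ < δ := by
      rw [Real.dist_eq]; rw [abs_of_neg (by linarith : ξ - h' - ξ < 0)]; linarith
    have hthis := hδ hmem hdist
    rw [Real.dist_eq, slope_def_field] at hthis
    have heq : (Fphi φ (ξ - h') - Fphi φ ξ) / (ξ - h' - ξ)
        = (Fphi φ ξ - Fphi φ (ξ - h')) / h' := by
      rw [show ξ - h' - ξ = -h' by ring, div_neg, ← neg_div, neg_sub]
    rw [heq, abs_lt] at hthis
    constructor
    · have h2 : d - d/4 < (Fphi φ ξ - Fphi φ (ξ - h')) / h' := by linarith [hthis.1]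
      calc 3*d/4 * h' = (d - d/4) * h' := by ring
        _ < (Fphi φ ξ - Fphi φ (ξ - h')) / h' * h' := mul_lt_mul_of_pos_right h2 h0
        _ = Fphi φ ξ - Fphi φ (ξ - h') := by field_simp
    · have h2 : (Fphi φ ξ - Fphi φ (ξ - h')) / h' < d + d/4 := by linarith [hthis.2]
      calc Fphi φ ξ - Fphi φ (ξ - h')
          = (Fphi φ ξ - Fphi φ (ξ - h')) / h' * h' := by field_simp
        _ < (d + d/4) * h' := mul_lt_mul_of_pos_right h2 h0
        _ = 5*d/4 * h' := by ring
  refine ⟨3/(2*d), by positivity, ?_⟩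
  have htend : Tendsto (fun n : ℕ => 3/(2*d) * ((1:ℝ)/2)^n) atTop (nhds 0) := by
    have := tendsto_pow_atTop_nhds_zero_of_lt_one (by norm_num : (0:ℝ) ≤ 1/2) (by norm_num)
    simpa using this.const_mul (3/(2*d))
  filter_upwards [htend.eventually_lt_const hδpos] with n hn
  set g : ℝ := ((1:ℝ)/2)^n with hg
  have hgpos : 0 < g := by positivity
  set hh : ℝ := 3/(2*d) * g with hhh
  have hhpos : 0 < hh := by positivity
  have hhδ : hh < δ := hn
  obtain ⟨hlow, hup⟩ := Hslope hh hhpos hhδ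
  have hSg : g < Fphi φ ξ - Fphi φ (ξ - hh) := by
    have : 3*d/4 * hh = 9/8 * g := by rw [hhh]; field_simp; ring
    nlinarith
  have hex : ∃ k ≤ n, ξ - hh ≤ (φ k : ℝ) ∧ (φ k : ℝ) < ξ := by
    by_contra hcon
    push_neg at hcon
    have : Fphi φ ξ - Fphi φ (ξ - hh) ≤ 2 * ((1:ℝ)/2)^(n+1) := by
      refine tail_le φ (by linarith) (n+1) (fun k h1 h2 => ?_)
      by_contra hk
      exact absurd h2 (not_lt.mpr (hcon k (by omega) h1))
    have h2 : 2 * ((1:ℝ)/2)^(n+1) = g := by rw [pow_succ]; ring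
    linarith
  obtain ⟨k, hkn, hk1, hk2⟩ := hex
  set h'' : ℝ := ξ - (φ k : ℝ) with hh''
  have h''pos : 0 < h'' := by simp [hh'']; linarith
  have h''le : h'' ≤ hh := by simp [hh'']; linarith
  have hle : ((1:ℝ)/2)^k ≤ Fphi φ ξ - Fphi φ (ξ - h'') := by
    have : ξ - h'' = (φ k : ℝ) := by rw [hh'']; ring
    rw [this]
    exact single_le φ hk2.le le_rfl hk2
  have hup' := (Hslope h'' h''pos (lt_of_le_of_lt h''le hhδ)).2
  have hkn' : k = n := by
    have h1 : ((1:ℝ)/2)^k < 2 * g := by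
      have h3 : 5*d/4 * h'' ≤ 5*d/4 * hh := mul_le_mul_of_nonneg_left h''le (by positivity)
      have h4 : 5*d/4 * hh = 15/8 * g := by rw [hhh]; field_simp; ring
      nlinarith
    have h2 : n ≤ k := by
      by_contra hc
      push_neg at hc
      have hkk : k + 1 ≤ n := hc
      have h5 : ((1:ℝ)/2)^n ≤ ((1:ℝ)/2)^(k+1) :=
        pow_le_pow_of_le_one (by norm_num) (by norm_num) hkk
      have h3 : ((1:ℝ)/2)^(k+1) = ((1:ℝ)/2)^k / 2 := by rw [pow_succ]; ring
      rw [hg] at h1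
      linarith
    omega
  subst hkn'
  exact ⟨hk2, by rw [hhh] at hk1; exact hk1⟩

lemma not_lt_right (φ : ℕ → ℚ) {ξ1 ξ2 d1 d2 : ℝ}
    (h1 : HasDerivWithinAt (Fphi φ) d1 (Set.Ioi ξ1) ξ1) (hd1 : d1 ≠ 0)
    (h2 : HasDerivWithinAt (Fphi φ) d2 (Set.Ioi ξ2) ξ2) (hd2 : d2 ≠ 0) :
    ¬ ξ1 < ξ2 := by
  intro hlt
  obtain ⟨C1, hC1, hev1⟩ := key_right φ h1 hd1
  obtain ⟨C2, hC2, hev2⟩ := key_right φ h2 hd2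
  have htend : Tendsto (fun n : ℕ => C1 * ((1:ℝ)/2)^n) atTop (nhds 0) := by
    have := tendsto_pow_atTop_nhds_zero_of_lt_one (by norm_num : (0:ℝ) ≤ 1/2) (by norm_num)
    simpa using this.const_mul C1
  have hev3 := htend.eventually_lt_const (by linarith : (0:ℝ) < ξ2 - ξ1)
  obtain ⟨n, ⟨hn1, hn2⟩, hn3⟩ := ((hev1.and hev2).and hev3).exists
  have : (φ n : ℝ) < ξ1 + C1 * ((1:ℝ)/2)^n := hn1.2
  have : ξ2 < (φ n : ℝ) := hn2.1
  linarith

lemma not_lt_left (φ : ℕ → ℚ) {ξ1 ξ2 d1 d2 : ℝ}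
    (h1 : HasDerivWithinAt (Fphi φ) d1 (Set.Iio ξ1) ξ1) (hd1 : d1 ≠ 0)
    (h2 : HasDerivWithinAt (Fphi φ) d2 (Set.Iio ξ2) ξ2) (hd2 : d2 ≠ 0) :
    ¬ ξ1 < ξ2 := by
  intro hlt
  obtain ⟨C1, hC1, hev1⟩ := key_left φ h1 hd1
  obtain ⟨C2, hC2, hev2⟩ := key_left φ h2 hd2
  have htend : Tendsto (fun n : ℕ => C2 * ((1:ℝ)/2)^n) atTop (nhds 0) := by
    have := tendsto_pow_atTop_nhds_zero_of_lt_one (by norm_num : (0:ℝ) ≤ 1/2) (by norm_num)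
    simpa using this.const_mul C2
  have hev3 := htend.eventually_lt_const (by linarith : (0:ℝ) < ξ2 - ξ1)
  obtain ⟨n, ⟨hn1, hn2⟩, hn3⟩ := ((hev1.and hev2).and hev3).exists
  have : (φ n : ℝ) < ξ1 := hn1.1
  have : ξ2 - C2 * ((1:ℝ)/2)^n ≤ (φ n : ℝ) := hn2.2
  linarith

end Stmt14Aux

theorem stmt14 (φ : ℕ → ℚ) (hφ : Function.Bijective φ) :
    {ξ : ℝ | ∃ d : ℝ, d ≠ 0 ∧ HasDerivWithinAt (Fphi φ) d (Set.Ioi ξ) ξ}.Subsingleton ∧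
    {ξ : ℝ | ∃ d : ℝ, d ≠ 0 ∧ HasDerivWithinAt (Fphi φ) d (Set.Iio ξ) ξ}.Subsingleton := by
  constructor
  · rintro ξ1 ⟨d1, hd1, h1⟩ ξ2 ⟨d2, hd2, h2⟩
    exact le_antisymm (not_lt.mp (Stmt14Aux.not_lt_right φ h2 hd2 h1 hd1))
      (not_lt.mp (Stmt14Aux.not_lt_right φ h1 hd1 h2 hd2)) ▸ rfl
  · rintro ξ1 ⟨d1, hd1, h1⟩ ξ2 ⟨d2, hd2, h2⟩
    exact le_antisymm (not_lt.mp (Stmt14Aux.not_lt_left φ h2 hd2 h1 hd1))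
      (not_lt.mp (Stmt14Aux.not_lt_left φ h1 hd1 h2 hd2)) ▸ rfl
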